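/- Let H be a free abelian group, Ω : H → H a group endomorphism, and G ⊆ H a finitely generated subgroup such that some iterate Ω^n(G) is contained in a finitely generated subgroup K of H with Ω(K) ⊆ K. Then η_Ω(G) is finite, i.e., there exists k such that for all m ≥ k the restriction Ω|_{Ω^m(G)} : Ω^m(G) → Ω^{m+1}(G) is injective. -/

import Mathlib

/-- If `G` is a finitely generated subgroup of a free abelian group `H` which is syzygy
finite (some iterate `Ω^n(G)` lands in a finitely generated `Ω`-invariant subgroup `K`),
then `η_Ω(G)` is finite. -/
theorem stmt3 (H : Type*) [AddCommGroup H] [Module.Free ℤ H] (Ω : AddMonoid.End H)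
    (G K : AddSubgroup H) (hG : G.FG) (hK : K.FG) (hKinv : ∀ x ∈ K, Ω x ∈ K)
    (n : ℕ) (hn : AddSubgroup.map (Ω ^ n) G ≤ K) :
    ∃ k : ℕ, ∀ m ≥ k, Set.InjOn Ω (AddSubgroup.map (Ω ^ m) G : Set H) := by
  classical
  -- Work with the `ℤ`-submodule corresponding to `K`.
  set M : Submodule ℤ H := AddSubgroup.toIntSubmodule K with hM
  have hMfg : M.FG := (Submodule.fg_iff_addSubgroup_fg M).mpr hK
  haveI : IsNoetherian ℤ M := isNoetherian_of_fg_of_noetherian M hMfg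
  -- The restriction of `Ω` to `K` as a linear endomorphism.
  have hres : ∀ x ∈ M, (AddMonoidHom.toIntLinearMap (Ω : H →+ H)) x ∈ M := fun x hx => hKinv x hx
  set g : M →ₗ[ℤ] M :=
    LinearMap.restrict (AddMonoidHom.toIntLinearMap (Ω : H →+ H)) hres with hg
  -- The coercion of `g ^ j` applied to `u` is `Ω ^ j` applied to `↑u`.
  have hcoe : ∀ (j : ℕ) (u : M), ((g ^ j) u : H) = (Ω ^ j) (u : H) := by
    intro j
    induction j with
    | zero => intro u; simp
    | succ j ih =>
      intro u
      have h1 : (g ^ (j + 1)) u = g ((g ^ j) u) := by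
        rw [pow_succ' g j]; rfl
      have h2 : (Ω ^ (j + 1)) (u : H) = Ω ((Ω ^ j) (u : H)) := by
        rw [pow_succ' Ω j]; rfl
      rw [h1, h2, ← ih u]
      rfl
  -- The kernels of powers of `g` stabilize.
  obtain ⟨j₀, hj₀⟩ :=
    monotone_stabilizes_iff_noetherian.mpr (inferInstance : IsNoetherian ℤ M) g.iterateKer
  refine ⟨n + j₀, fun m hm => ?_⟩
  rintro x hx y hy hxy
  -- `z = x - y` lies in `Ω^m(G)`, and `Ω z = 0`.
  have hz : x - y ∈ AddSubgroup.map (Ω ^ m) G := sub_mem hx hy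
  obtain ⟨w, hw, hwz⟩ := hz
  set j : ℕ := m - n with hj
  have hmj : m = j + n := by omega
  have hjj : j₀ ≤ j := by omega
  -- `u = Ω^n w ∈ K`.
  have hu : (Ω ^ n) w ∈ K := hn ⟨w, hw, rfl⟩
  set u : M := ⟨(Ω ^ n) w, hu⟩ with hudef
  -- `Ω^j u = x - y`.
  have hju : (Ω ^ j) ((u : H)) = x - y := by
    have h1 : (Ω ^ j) ((Ω ^ n) w) = (Ω ^ m) w := by
      rw [hmj, pow_add Ω j n]; rfl
    show (Ω ^ j) ((Ω ^ n) w) = x - y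
    rw [h1]; exact hwz
  -- `g^(j+1) u = 0`.
  have hker1 : u ∈ LinearMap.ker (g ^ (j + 1)) := by
    have hval : ((g ^ (j + 1)) u : H) = 0 := by
      rw [hcoe (j + 1) u]
      have : (Ω ^ (j + 1)) ((u : H)) = Ω ((Ω ^ j) ((u : H))) := by
        rw [pow_succ' Ω j]; rfl
      rw [this, hju]
      simp [map_sub, hxy]
    exact Subtype.ext hval
  -- Kernel stabilization gives `g^j u = 0`.
  have hker2 : u ∈ LinearMap.ker (g ^ j) := by
    have e1 : g.iterateKer j₀ = g.iterateKer j := hj₀ j hjj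
    have e2 : g.iterateKer j₀ = g.iterateKer (j + 1) := hj₀ (j + 1) (by omega)
    have : g.iterateKer j = g.iterateKer (j + 1) := e1 ▸ e2
    have hmem : u ∈ g.iterateKer (j + 1) := by
      exact hker1
    rw [← this] at hmem
    exact hmem
  -- Hence `x - y = Ω^j u = 0`.
  have : (Ω ^ j) ((u : H)) = 0 := by
    have h0 : (g ^ j) u = 0 := hker2
    have := hcoe j u
    rw [h0] at this
    simpa using this.symm
  have hxy0 : x - y = 0 := by rw [← hju, this]
  exact sub_eq_zero.mp hxy0
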